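/- For every ZFSet u there is at most one Anfang M such that u ∈ M and no Anfang that is a proper subset of M contains u: if M₁ and M₂ are both Anfänge containing u with this minimality property, then M₁ = M₂. (Von Neumann's claim that for each u there is 'kein oder nur ein' such M.) -/
import Mathlib


/-- The von Neumann natural number `n̄`: `0̄ = ∅`, `(n+1)‾ = n̄⁺ = insert n̄ n̄`. -/
def vN : ℕ → ZFSet
  | 0 => ∅
  | n + 1 => insert (vN n) (vN n)

/-- An *Anfang* in the sense of von Neumann's letter to Fraenkel of 17 June 1927:
every element `u` of `M` is either the pair `⟨1̄, ω⟩` or of the form `⟨x⁺, ℘(y)⟩`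
for some pair `⟨x, y⟩ ∈ M`. -/
def Anfang (M : ZFSet) : Prop :=
  ∀ u ∈ M, u = ZFSet.pair (vN 1) ZFSet.omega ∨
    ∃ x y : ZFSet, ZFSet.pair x y ∈ M ∧ u = ZFSet.pair (insert x x) (ZFSet.powerset y)

lemma succ_inj {x y : ZFSet} (h : insert x x = insert y y) : x = y := by
  have hx : x ∈ insert y y := h ▸ ZFSet.mem_insert x x
  have hy : y ∈ insert x x := h.symm ▸ ZFSet.mem_insert y y
  rcases ZFSet.mem_insert_iff.mp hx with h1 | h1
  · exact h1
  rcases ZFSet.mem_insert_iff.mp hy with h2 | h2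
  · exact h2.symm
  exact absurd h2 (ZFSet.mem_asymm h1)

lemma pow_inj {x y : ZFSet} (h : ZFSet.powerset x = ZFSet.powerset y) : x = y := by
  have hx : x ∈ ZFSet.powerset y := h ▸ ZFSet.mem_powerset.mpr (fun z hz => hz)
  have hy : y ∈ ZFSet.powerset x := h.symm ▸ ZFSet.mem_powerset.mpr (fun z hz => hz)
  exact ZFSet.ext fun z =>
    ⟨fun hz => ZFSet.mem_powerset.mp hx hz, fun hz => ZFSet.mem_powerset.mp hy hz⟩

lemma inter_Anfang {M₁ M₂ : ZFSet} (h₁ : Anfang M₁) (h₂ : Anfang M₂) :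
    Anfang (M₁ ∩ M₂) := by
  intro u hu
  rw [ZFSet.mem_inter] at hu
  rcases h₁ u hu.1 with h | ⟨x, y, hxy, rfl⟩
  · exact Or.inl h
  rcases h₂ _ hu.2 with h | ⟨x', y', hxy', he⟩
  · exact Or.inl h
  · obtain ⟨hx, hy⟩ := ZFSet.pair_injective he
    have hx' : x' = x := succ_inj hx.symm
    have hy' : y' = y := pow_inj hy.symm
    subst hx'; subst hy'
    exact Or.inr ⟨x', y', ZFSet.mem_inter.mpr ⟨hxy, hxy'⟩, rfl⟩

/-- For every `u` there is at most one Anfang `M` containing `u` such that no Anfang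
that is a proper subset of `M` contains `u` ("kein oder nur ein"). -/
theorem minimal_Anfang_unique {u M₁ M₂ : ZFSet}
    (h₁ : Anfang M₁) (hu₁ : u ∈ M₁)
    (hmin₁ : ¬ ∃ M' : ZFSet, Anfang M' ∧ M' ⊆ M₁ ∧ M' ≠ M₁ ∧ u ∈ M')
    (h₂ : Anfang M₂) (hu₂ : u ∈ M₂)
    (hmin₂ : ¬ ∃ M' : ZFSet, Anfang M' ∧ M' ⊆ M₂ ∧ M' ≠ M₂ ∧ u ∈ M') :
    M₁ = M₂ := by
  push_neg at hmin₁ hmin₂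
  have hA := inter_Anfang h₁ h₂
  have hu : u ∈ M₁ ∩ M₂ := ZFSet.mem_inter.mpr ⟨hu₁, hu₂⟩
  have e₁ : M₁ ∩ M₂ = M₁ := by
    by_contra hne
    exact absurd hu (hmin₁ _ hA (fun z hz => (ZFSet.mem_inter.mp hz).1) hne)
  have e₂ : M₁ ∩ M₂ = M₂ := by
    by_contra hne
    exact absurd hu (hmin₂ _ hA (fun z hz => (ZFSet.mem_inter.mp hz).2) hne)
  rw [← e₁, e₂]
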